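/- Let d, N be positive integers with N ≥ 2, and let x_1, …, x_N be unit vectors in ℂ^d. Then min_{m ≠ n} (1 − |⟨x_m, x_n⟩|²) ≤ ((d − 1)/d) · (N/(N − 1)). -/

import Mathlib

/-- **Rankin bound for projective packings**: for `N ≥ 2` unit vectors in `ℂ^d`
(representing `N` lines in the complex projective space `ℂP^{d−1}`), the squared
packing diameter `min_{m ≠ n} (1 − |⟨x_m, x_n⟩|²)` is at most
`((d−1)/d)·(N/(N−1))`. -/
theorem rankin_bound_projective (d N : ℕ) (hd : 0 < d) (hN : 2 ≤ N)
    (x : Fin N → EuclideanSpace ℂ (Fin d)) (hx : ∀ n, ‖x n‖ = 1) :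
    ∃ m n : Fin N, m ≠ n ∧
      1 - ‖(inner ℂ (x m) (x n) : ℂ)‖ ^ 2 ≤
        (((d : ℝ) - 1) / d) * ((N : ℝ) / ((N : ℝ) - 1)) := by
  classical
  have hdR : (0:ℝ) < d := by exact_mod_cast hd
  have hd0 : (d:ℝ) ≠ 0 := ne_of_gt hdR
  have hNR : (2:ℝ) ≤ (N:ℝ) := by exact_mod_cast hN
  have hN1 : (N:ℝ) - 1 ≠ 0 := by linarith
  set f : Fin N → Fin N → ℝ := fun m n => ‖(inner ℂ (x m) (x n) : ℂ)‖ ^ 2 with hf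
  set v : Fin N → EuclideanSpace ℂ (Fin d × Fin d) :=
    fun n => WithLp.toLp 2 (fun p : Fin d × Fin d => x n p.1 * (starRingEnd ℂ) (x n p.2)) with hv
  have hinner : ∀ a b, (inner ℂ (v a) (v b) : ℂ) = ((f a b : ℝ) : ℂ) := by
    intro a b
    have hz : ((f a b : ℝ) : ℂ)
        = (starRingEnd ℂ) (inner ℂ (x a) (x b) : ℂ) * (inner ℂ (x a) (x b) : ℂ) := by
      rw [mul_comm, Complex.mul_conj]
      norm_cast
      simp [hf, ← Complex.sq_norm]
    rw [hz]
    simp only [PiLp.inner_apply, RCLike.inner_apply, hv, PiLp.toLp_apply]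
    rw [Fintype.sum_prod_type, map_sum, Finset.sum_mul_sum, Finset.sum_comm]
    refine Finset.sum_congr rfl fun i _ => Finset.sum_congr rfl fun j _ => ?_
    simp only [map_mul, Complex.conj_conj]
    ring
  set V : EuclideanSpace ℂ (Fin d × Fin d) := ∑ n, v n with hV
  set S : ℝ := ∑ m, ∑ n, f m n with hS
  have hVV : (‖V‖^2 : ℝ) = S := by
    have h1 : (inner ℂ V V : ℂ) = ((S : ℝ) : ℂ) := by
      rw [hV, sum_inner]
      simp only [inner_sum, hinner]
      rw [hS]
      push_cast
      ring
    have h2 : (inner ℂ V V : ℂ) = ((‖V‖^2 : ℝ) : ℂ) := by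
      rw [inner_self_eq_norm_sq_to_K]
      push_cast
      rfl
    exact_mod_cast h2.symm.trans h1
  have hxinner : ∀ n, (inner ℂ (x n) (x n) : ℂ) = 1 := by
    intro n
    rw [inner_self_eq_norm_sq_to_K, hx n]
    norm_num
  set w : EuclideanSpace ℂ (Fin d × Fin d) :=
    WithLp.toLp 2 (fun p : Fin d × Fin d => if p.1 = p.2 then (1:ℂ) else 0) with hw
  have hwv : ∀ n, (inner ℂ w (v n) : ℂ) = 1 := by
    intro n
    simp only [PiLp.inner_apply, RCLike.inner_apply, hw, hv, PiLp.toLp_apply]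
    rw [Fintype.sum_prod_type]
    dsimp only
    have hrow : ∀ i : Fin d,
        (∑ j : Fin d, (x n i * (starRingEnd ℂ) (x n j))
            * (starRingEnd ℂ) (if i = j then (1:ℂ) else 0))
          = x n i * (starRingEnd ℂ) (x n i) := by
      intro i
      rw [Finset.sum_eq_single i]
      · simp
      · intro j _ hj
        simp [(Ne.symm hj : ¬ i = j)]
      · simp
    rw [Finset.sum_congr rfl fun i _ => hrow i]
    have : ∑ i : Fin d, x n i * (starRingEnd ℂ) (x n i) = (inner ℂ (x n) (x n) : ℂ) := by
      simp only [PiLp.inner_apply, RCLike.inner_apply, mul_comm]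
    rw [this, hxinner n]
  have hwVsum : (inner ℂ w V : ℂ) = (N : ℂ) := by
    rw [hV, inner_sum]
    simp [hwv]
  have hww : (‖w‖^2 : ℝ) = d := by
    have h1 : (inner ℂ w w : ℂ) = (d : ℂ) := by
      simp only [PiLp.inner_apply, RCLike.inner_apply, hw, PiLp.toLp_apply]
      rw [Fintype.sum_prod_type]
      dsimp only
      have hrow : ∀ i : Fin d,
          (∑ j : Fin d, (if i = j then (1:ℂ) else 0)
              * (starRingEnd ℂ) (if i = j then (1:ℂ) else 0)) = 1 := by
        intro i
        rw [Finset.sum_eq_single i]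
        · simp
        · intro j _ hj
          simp [(Ne.symm hj : ¬ i = j)]
        · simp
      rw [Finset.sum_congr rfl fun i _ => hrow i]
      simp
    have h2 : (inner ℂ w w : ℂ) = ((‖w‖^2 : ℝ) : ℂ) := by
      rw [inner_self_eq_norm_sq_to_K]
      push_cast
      rfl
    have := h2.symm.trans h1
    exact_mod_cast this
  have hCS : (N:ℝ)^2 ≤ d * S := by
    have hcs := norm_inner_le_norm (𝕜 := ℂ) w V
    rw [hwVsum] at hcs
    have hnormN : ‖(N:ℂ)‖ = (N:ℝ) := by
      simp
    rw [hnormN] at hcs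
    calc (N:ℝ)^2 ≤ (‖w‖*‖V‖)^2 := by
          apply pow_le_pow_left₀ (by positivity) hcs
      _ = ‖w‖^2 * ‖V‖^2 := by ring
      _ = d * S := by rw [hww, hVV]
  have hdiag : ∀ n, f n n = 1 := by
    intro n
    rw [hf]
    simp only [hxinner]
    norm_num
  have hsplit : S = (∑ p ∈ Finset.univ.offDiag, f p.1 p.2) + N := by
    rw [hS, ← Finset.sum_product']
    rw [← Finset.diag_union_offDiag Finset.univ,
      Finset.sum_union (Finset.disjoint_diag_offDiag _), Finset.sum_diag]
    simp only [hdiag]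
    rw [Finset.sum_const, Finset.card_univ, Fintype.card_fin]
    push_cast
    ring
  set c : ℝ := ((N:ℝ) - d) / (d * ((N:ℝ) - 1)) with hc
  have hcard : ((Finset.univ.offDiag : Finset (Fin N × Fin N)).card : ℝ)
      = (N:ℝ)*N - N := by
    rw [Finset.offDiag_card, Finset.card_univ, Fintype.card_fin]
    have : N ≤ N * N := Nat.le_mul_of_pos_left N (by omega)
    push_cast [Nat.cast_sub this]
    ring
  have hne : (Finset.univ.offDiag : Finset (Fin N × Fin N)).Nonempty := by
    refine ⟨(⟨0, by omega⟩, ⟨1, by omega⟩), ?_⟩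
    rw [Finset.mem_offDiag]
    refine ⟨Finset.mem_univ _, Finset.mem_univ _, ?_⟩
    intro h
    have := congrArg Fin.val h
    simp at this
  have havg : ∑ _p ∈ (Finset.univ.offDiag : Finset (Fin N × Fin N)), c
      ≤ ∑ p ∈ (Finset.univ.offDiag : Finset (Fin N × Fin N)), f p.1 p.2 := by
    rw [Finset.sum_const, nsmul_eq_mul, hcard]
    have h1 : (∑ p ∈ (Finset.univ.offDiag : Finset (Fin N × Fin N)), f p.1 p.2)
        = S - N := by linarith [hsplit]
    rw [h1, hc]
    have h2 : ((N:ℝ)*N - N) * (((N:ℝ) - d) / (d * ((N:ℝ) - 1))) = (N:ℝ)^2/d - N := by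
      field_simp
    rw [h2]
    have h3 : (N:ℝ)^2/d ≤ S := (div_le_iff₀ hdR).mpr (by linarith [hCS])
    linarith
  obtain ⟨p, hp, hcp⟩ := Finset.exists_le_of_sum_le hne havg
  refine ⟨p.1, p.2, (Finset.mem_offDiag.mp hp).2.2, ?_⟩
  have heq : 1 - c = (((d : ℝ) - 1) / d) * ((N : ℝ) / ((N : ℝ) - 1)) := by
    rw [hc]
    field_simp
    ring
  have : 1 - f p.1 p.2 ≤ 1 - c := by linarith
  rw [← heq]
  exact this
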